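/- There is a perfect set P ⊆ ℝ² contained in the graph of a convex C¹ function ψ : ℝ → ℝ such that P meets every C² arc in a finite set, where a C² arc is the image of an injective C² map g from a compact interval into ℝ² with g'(t) ≠ 0 for all t. -/

import Mathlib

open Set Metric Filter intervalIntegral Topology

noncomputable section

namespace Stmt16

/-- digit summand -/
def dig (a : ℕ → Bool) (i : ℕ) : ℝ := if a i then 2 / 3 ^ (i + 1) else 0

lemma dig_nonneg (a : ℕ → Bool) (i : ℕ) : 0 ≤ dig a i := by
  unfold dig; split
  · positivity
  · exact le_rfl

lemma dig_le (a : ℕ → Bool) (i : ℕ) : dig a i ≤ 2 / 3 ^ (i + 1) := by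
  unfold dig; split
  · exact le_rfl
  · positivity

lemma summable_u : Summable (fun i : ℕ => (2:ℝ) / 3 ^ (i + 1)) := by
  have h := (summable_geometric_of_lt_one (by norm_num : (0:ℝ) ≤ 1/3) (by norm_num)).mul_left (2/3)
  refine h.congr fun i => ?_
  rw [pow_succ, one_div_pow]
  field_simp

lemma summable_dig (a : ℕ → Bool) : Summable (dig a) :=
  Summable.of_nonneg_of_le (dig_nonneg a) (dig_le a) summable_u

/-- the embedding of Cantor space into ℝ -/
def e (a : ℕ → Bool) : ℝ := ∑' i, dig a i

lemma tsum_u_tail (n : ℕ) : ∑' i : ℕ, (2:ℝ) / 3 ^ (i + n + 1) = 1 / 3 ^ n := by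
  have h : ∀ i : ℕ, (2:ℝ) / 3 ^ (i + n + 1) = (2 / 3 ^ (n + 1)) * (1/3) ^ i := by
    intro i
    rw [pow_add, pow_add, one_div_pow]
    field_simp
    ring
  rw [tsum_congr h, tsum_mul_left, tsum_geometric_of_lt_one (by norm_num) (by norm_num)]
  rw [pow_succ]
  field_simp
  ring

lemma tail_nonneg (a : ℕ → Bool) (n : ℕ) : 0 ≤ ∑' i, dig a (i + n) :=
  tsum_nonneg fun i => dig_nonneg a _

lemma tail_le (a : ℕ → Bool) (n : ℕ) : ∑' i, dig a (i + n) ≤ 1 / 3 ^ n := by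
  rw [← tsum_u_tail n]
  exact Summable.tsum_le_tsum (fun i => dig_le a (i + n)) ((summable_dig a).comp_injective (add_left_injective n))
    (summable_u.comp_injective (add_left_injective n))

lemma e_eq (a : ℕ → Bool) (n : ℕ) :
    e a = (∑ i ∈ Finset.range n, dig a i) + ∑' i, dig a (i + n) :=
  (Summable.sum_add_tsum_nat_add n (summable_dig a)).symm

lemma e_mem_Icc (a : ℕ → Bool) : e a ∈ Icc (0:ℝ) 1 := by
  constructor
  · exact tsum_nonneg (dig_nonneg a)
  · have h := e_eq a 0
    simp at h
    calc e a = ∑' i, dig a (i + 0) := by simpa using h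
    _ ≤ 1 / 3 ^ 0 := tail_le a 0
    _ = 1 := by norm_num

lemma continuous_e : Continuous e := by
  apply continuous_tsum (u := fun i : ℕ => (2:ℝ) / 3 ^ (i + 1))
  · intro i
    have : Continuous fun b : Bool => if b then (2:ℝ) / 3 ^ (i + 1) else 0 :=
      continuous_of_discreteTopology
    exact this.comp (continuous_apply i)
  · exact summable_u
  · intro i a
    rw [Real.norm_eq_abs, abs_of_nonneg (dig_nonneg a i)]
    exact dig_le a i

/-- our Cantor set -/
def C : Set ℝ := Set.range e

lemma C_nonempty : C.Nonempty := ⟨e (fun _ => false), ⟨_, rfl⟩⟩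

lemma isCompact_C : IsCompact C := isCompact_range continuous_e

lemma isClosed_C : IsClosed C := isCompact_C.isClosed

lemma C_subset : C ⊆ Icc (0:ℝ) 1 := by
  rintro x ⟨a, rfl⟩; exact e_mem_Icc a

/-- approach property: every point of C is approached by other points of C -/
lemma approach (a : ℕ → Bool) {ε : ℝ} (hε : 0 < ε) :
    ∃ b : ℕ → Bool, e b ≠ e a ∧ |e b - e a| < ε := by
  obtain ⟨n, hn⟩ := exists_pow_lt_of_lt_one hε (by norm_num : (1:ℝ)/3 < 1)
  refine ⟨Function.update a n (!a n), ?_, ?_⟩ <;>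
  · have hdiff : e (Function.update a n (!a n)) - e a = dig (Function.update a n (!a n)) n - dig a n := by
      have hsum : e (Function.update a n (!a n)) - e a
          = ∑' i, (dig (Function.update a n (!a n)) i - dig a i) :=
        (Summable.tsum_sub (summable_dig _) (summable_dig a)).symm
      rw [hsum]
      apply tsum_eq_single
      intro i hi
      unfold dig
      rw [Function.update_of_ne hi]
      ring
    have habs : |e (Function.update a n (!a n)) - e a| = 2 / 3 ^ (n + 1) := by
      rw [hdiff]
      unfold dig
      rw [Function.update_self]
      cases h : a n <;> simp [h] <;> positivity
    first
      | · intro h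
          rw [h, sub_self] at habs
          have : (0:ℝ) < 2 / 3 ^ (n+1) := by positivity
          simp at habs
          linarith [habs]
      | · rw [habs]
          calc (2:ℝ) / 3 ^ (n+1) ≤ (1/3)^n := by
                rw [div_pow, one_pow, pow_succ]
                rw [div_le_div_iff₀ (by positivity) (by positivity)]
                nlinarith [pow_pos (by norm_num : (0:ℝ) < 3) n]
          _ < ε := hn


/-- every open interval contains a point not in C -/
lemma exists_gap {u v : ℝ} (huv : u < v) : ∃ y, y ∈ Ioo u v ∧ y ∉ C := by
  obtain ⟨n, hn⟩ := exists_pow_lt_of_lt_one (sub_pos.2 huv) (by norm_num : (1:ℝ)/3 < 1)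
  have h3 : (0:ℝ) < 3 ^ (n+1) := by positivity
  set m : ℤ := ⌊(3 ^ (n+1) * u - 3/2) / 3⌋ + 1 with hm
  set y : ℝ := (3 * m + 3/2) / 3 ^ (n+1) with hy
  have hlen : 3 < 3 ^ (n+1) * (v - u) := by
    have h1 : (1/3:ℝ)^n < v - u := hn
    have h2 : (3:ℝ)^(n+1) = 3 * 3^n := by ring
    have h3n : (0:ℝ) < 3^n := by positivity
    rw [h2]
    have : (1:ℝ) < 3^n * (v - u) := by
      have := (div_lt_iff₀ h3n).mp (by rwa [div_pow, one_pow] at h1)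
      linarith
    nlinarith
  have hu : u < y := by
    rw [hy, lt_div_iff₀ h3]
    have := Int.lt_floor_add_one ((3 ^ (n+1) * u - 3/2) / 3)
    have hmgt : (3 ^ (n+1) * u - 3/2) / 3 < (m:ℝ) := by
      rw [hm]; push_cast; linarith
    rw [div_lt_iff₀ (by norm_num : (0:ℝ) < 3)] at hmgt
    linarith
  have hv : y < v := by
    rw [hy, div_lt_iff₀ h3]
    have hfl := Int.floor_le ((3 ^ (n+1) * u - 3/2) / 3)
    have hmle : (m:ℝ) ≤ (3 ^ (n+1) * u - 3/2) / 3 + 1 := by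
      rw [hm]; push_cast; linarith
    rw [div_add' _ _ _ (by norm_num : (3:ℝ) ≠ 0), le_div_iff₀ (by norm_num : (0:ℝ) < 3)] at hmle
    nlinarith
  refine ⟨y, ⟨hu, hv⟩, ?_⟩
  rintro ⟨a, ha⟩
  -- e a = y leads to contradiction mod 3
  set S : ℝ := ∑ i ∈ Finset.range (n+1), dig a i with hS
  set r : ℝ := ∑' i, dig a (i + (n+1)) with hr
  have hear : e a = S + r := e_eq a (n+1)
  set N : ℤ := ∑ i ∈ Finset.range (n+1), (if a i then 2 * 3 ^ (n - i) else 0) with hN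
  have hNS : (N : ℝ) = 3 ^ (n+1) * S := by
    rw [hN, hS, Finset.mul_sum]
    push_cast
    apply Finset.sum_congr rfl
    intro i hi
    have hin : i + 1 ≤ n + 1 := Nat.succ_le_succ (Nat.lt_succ_iff.mp (Finset.mem_range.mp hi))
    unfold dig
    split
    · push_cast
      rw [mul_div_assoc']
      rw [eq_div_iff (by positivity : (3:ℝ)^(i+1) ≠ 0)]
      have hexp : (3:ℝ) ^ (n - i) * 3 ^ (i + 1) = 3 ^ (n + 1) := by
        rw [← pow_add]; congr 1; omega
      calc (2:ℝ) * 3 ^ (n-i) * 3 ^ (i+1) = (3 ^ (n-i) * 3 ^ (i+1)) * 2 := by ring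
      _ = 3 ^ (n+1) * 2 := by rw [hexp]
    · simp
  have hrho : 0 ≤ 3^(n+1) * r ∧ 3^(n+1) * r ≤ 1 := by
    constructor
    · exact mul_nonneg (le_of_lt h3) (tail_nonneg a (n+1))
    · have := tail_le a (n+1)
      calc 3^(n+1) * r ≤ 3^(n+1) * (1 / 3^(n+1)) := by nlinarith [tail_le a (n+1)]
      _ = 1 := by field_simp
  -- N = 3m + 1
  have hkey : (N:ℝ) = 3 * m + 3/2 - 3^(n+1) * r := by
    have : 3^(n+1) * e a = 3 * m + 3/2 := by
      rw [ha, hy]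
      rw [mul_div_assoc', mul_comm, mul_div_assoc]
      rw [div_self (ne_of_gt h3), mul_one]
    rw [hear] at this
    rw [hNS]; linarith [this]
  have hN1 : N = 3 * m + 1 := by
    have h1 : (3 * m + 1/2 : ℝ) ≤ (N:ℝ) := by rw [hkey]; linarith [hrho.2]
    have h2 : (N:ℝ) ≤ 3 * m + 3/2 := by rw [hkey]; linarith [hrho.1]
    have h1' : 3 * m + 1 ≤ N := by
      have : (3 * m : ℝ) < (N:ℝ) := by linarith
      exact_mod_cast Int.add_one_le_of_lt (by exact_mod_cast this)
    have h2' : N ≤ 3 * m + 1 := by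
      have : (N:ℝ) < 3 * m + 2 := by linarith
      have hc : ((N:ℝ) < ((3 * m + 2 : ℤ) : ℝ)) := by push_cast; linarith
      have : N < 3*m+2 := by exact_mod_cast hc
      omega
    omega
  -- but N ≡ 0 or 2 mod 3
  have hmod : ∃ K : ℤ, N = 3 * K + (if a n then 2 else 0) := by
    rw [hN, Finset.sum_range_succ]
    have hlast : (if a n then (2:ℤ) * 3 ^ (n - n) else 0) = (if a n then 2 else 0) := by
      simp
    rw [hlast]
    refine ⟨∑ i ∈ Finset.range n, (if a i then 2 * 3 ^ (n - i - 1) else 0), ?_⟩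
    congr 1
    rw [Finset.mul_sum]
    apply Finset.sum_congr rfl
    intro i hi
    have hilt : i < n := Finset.mem_range.mp hi
    split
    · rw [mul_left_comm]
      congr 1
      rw [← pow_succ']
      congr 1
      omega
    · simp
  obtain ⟨K, hK⟩ := hmod
  rw [hN1] at hK
  split at hK <;> omega


noncomputable def m0 : ℝ → ℝ := fun s => min (infDist s C) 1

lemma continuous_m0 : Continuous m0 :=
  (continuous_infDist_pt C).min continuous_const

lemma m0_nonneg (s : ℝ) : 0 ≤ m0 s := le_min infDist_nonneg zero_le_one

lemma m0_le_one (s : ℝ) : m0 s ≤ 1 := min_le_right _ _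

lemma m0_le_dist {c : ℝ} (hc : c ∈ C) (s : ℝ) : m0 s ≤ |s - c| := by
  refine le_trans (min_le_left _ _) ?_
  simpa [Real.dist_eq] using infDist_le_dist_of_mem hc

lemma m0_intable (a b : ℝ) : IntervalIntegrable m0 MeasureTheory.volume a b :=
  continuous_m0.intervalIntegrable a b

noncomputable def f (t : ℝ) : ℝ := ∫ s in (0:ℝ)..t, m0 s

lemma f_sub (c d : ℝ) : f d - f c = ∫ s in c..d, m0 s := by
  have h := integral_add_adjacent_intervals (m0_intable 0 c) (m0_intable c d)
  unfold f
  linarith [h]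

lemma f_mono : Monotone f := by
  intro c d hcd
  have h := f_sub c d
  have : 0 ≤ ∫ s in c..d, m0 s := integral_nonneg hcd (fun s _ => m0_nonneg s)
  linarith

lemma f_strictMono : StrictMono f := by
  intro u v huv
  obtain ⟨y, hy, hyC⟩ := exists_gap huv
  have hr : 0 < infDist y C := (isClosed_C.notMem_iff_infDist_pos C_nonempty).1 hyC
  set r := infDist y C
  set δ : ℝ := min (r/2) (min ((v - y)/2) ((y - u)/2)) with hδ
  have hδpos : 0 < δ := by
    apply lt_min (by linarith)
    exact lt_min (by cases hy; linarith) (by cases hy; linarith)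
  have h1 : u ≤ y - δ := by
    have : δ ≤ (y - u)/2 := le_trans (min_le_right _ _) (min_le_right _ _)
    cases hy; linarith
  have h2 : y + δ ≤ v := by
    have : δ ≤ (v - y)/2 := le_trans (min_le_right _ _) (min_le_left _ _)
    cases hy; linarith
  have hmid : 0 < ∫ s in (y - δ)..(y + δ), m0 s := by
    apply intervalIntegral_pos_of_pos_on (m0_intable _ _)
    · intro x hx
      have hd : dist x y < δ := by
        rw [Real.dist_eq, abs_lt]; cases hx; constructor <;> linarith
      have hinf : r ≤ infDist x C + dist y x := infDist_le_infDist_add_dist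
      rw [dist_comm] at hd
      have hδr : δ ≤ r/2 := min_le_left _ _
      have : r/2 ≤ infDist x C := by linarith
      exact lt_min (by linarith) one_pos
    · linarith
  have hsplit : f v - f u = (∫ s in u..(y-δ), m0 s) + (∫ s in (y-δ)..(y+δ), m0 s)
      + ∫ s in (y+δ)..v, m0 s := by
    rw [f_sub]
    rw [← integral_add_adjacent_intervals (m0_intable u (y-δ)) (m0_intable (y-δ) v)]
    rw [← integral_add_adjacent_intervals (m0_intable (y-δ) (y+δ)) (m0_intable (y+δ) v)]
    ring
  have hi1 : 0 ≤ ∫ s in u..(y-δ), m0 s := integral_nonneg h1 (fun s _ => m0_nonneg s)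
  have hi3 : 0 ≤ ∫ s in (y+δ)..v, m0 s := integral_nonneg (by linarith) (fun s _ => m0_nonneg s)
  have : 0 < f v - f u := by rw [hsplit]; linarith
  linarith

lemma f_flat {c : ℝ} (hc : c ∈ C) (d : ℝ) : |f d - f c| ≤ (d - c)^2 := by
  rcases le_total c d with h | h
  · rw [abs_of_nonneg (by linarith [f_mono h] : 0 ≤ f d - f c)]
    rw [f_sub]
    have hmono : (∫ s in c..d, m0 s) ≤ ∫ s in c..d, (s - c) := by
      apply integral_mono_on h (m0_intable c d)
        ((continuous_id.sub continuous_const).intervalIntegrable c d)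
      intro s hs
      refine le_trans (m0_le_dist hc s) ?_
      rw [abs_of_nonneg (by linarith [hs.1] : (0:ℝ) ≤ s - c)]
      simp
    have hval : (∫ s in c..d, (s - c)) = (d - c)^2/2 := by
      rw [integral_sub intervalIntegrable_id (intervalIntegrable_const)]
      rw [integral_id, integral_const]
      simp [smul_eq_mul]; ring
    nlinarith [sq_nonneg (d - c)]
  · rw [abs_of_nonpos (by linarith [f_mono h] : f d - f c ≤ 0)]
    have : f c - f d = ∫ s in d..c, m0 s := f_sub d c
    have hmono : (∫ s in d..c, m0 s) ≤ ∫ s in d..c, (c - s) := by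
      apply integral_mono_on h (m0_intable d c)
        ((continuous_const.sub continuous_id).intervalIntegrable d c)
      intro s hs
      refine le_trans (m0_le_dist hc s) ?_
      rw [abs_of_nonpos (by linarith [hs.2] : s - c ≤ 0)]
      simp
    have hval : (∫ s in d..c, (c - s)) = (c - d)^2/2 := by
      rw [integral_sub intervalIntegrable_const intervalIntegrable_id]
      rw [integral_id, integral_const]
      simp [smul_eq_mul]; ring
    nlinarith [sq_nonneg (c - d)]

lemma f_lipschitz : LipschitzWith 1 f := by
  apply LipschitzWith.of_dist_le_mul
  intro s t
  rw [NNReal.coe_one, Real.dist_eq, Real.dist_eq]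
  have h : f s - f t = ∫ x in t..s, m0 x := f_sub t s
  rw [h]
  calc |∫ x in t..s, m0 x| = ‖∫ x in t..s, m0 x‖ := rfl
  _ ≤ 1 * |s - t| := by
      apply intervalIntegral.norm_integral_le_of_norm_le_const
      intro x _
      rw [Real.norm_eq_abs, abs_of_nonneg (m0_nonneg x)]
      exact m0_le_one x

lemma f_continuous : Continuous f := f_lipschitz.continuous

lemma f_surjective : Function.Surjective f := by
  apply Continuous.surjective f_continuous
  · -- atTop
    apply tendsto_atTop_mono' _ _ (tendsto_atTop_add_const_right atTop (f 2 - 2) tendsto_id)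
    filter_upwards [eventually_ge_atTop (2:ℝ)] with t ht
    have h1 : ∀ s ∈ Icc (2:ℝ) t, (1:ℝ) ≤ m0 s := by
      intro s hs
      apply le_min _ le_rfl
      haveI := C_nonempty.to_subtype
      rw [Metric.infDist_eq_iInf]
      apply le_ciInf
      rintro ⟨c, hcC⟩
      have h2c := (C_subset hcC).2
      rw [Real.dist_eq]
      rw [abs_of_nonneg (by linarith [hs.1] : (0:ℝ) ≤ s - c)]
      linarith [hs.1]
    have h2 : (t - 2 : ℝ) ≤ ∫ s in (2:ℝ)..t, m0 s := by
      have := integral_mono_on ht ((continuous_const (y := (1:ℝ))).intervalIntegrable 2 t)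
        (m0_intable 2 t) h1
      rwa [integral_const, smul_eq_mul, mul_one] at this
    have h3 : f t - f 2 = ∫ s in (2:ℝ)..t, m0 s := f_sub 2 t
    simp only [id]
    linarith
  · -- atBot
    apply tendsto_atBot_mono' _ _ (tendsto_atBot_add_const_right atBot (f (-1) + 1) tendsto_id)
    filter_upwards [eventually_le_atBot (-1:ℝ)] with t ht
    have h1 : ∀ s ∈ Icc t (-1:ℝ), (1:ℝ) ≤ m0 s := by
      intro s hs
      apply le_min _ le_rfl
      haveI := C_nonempty.to_subtype
      rw [Metric.infDist_eq_iInf]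
      apply le_ciInf
      rintro ⟨c, hcC⟩
      have h1c := (C_subset hcC).1
      rw [Real.dist_eq]
      rw [abs_of_nonpos (by linarith [hs.2] : s - c ≤ 0)]
      linarith [hs.2]
    have h2 : ((-1:ℝ) - t) ≤ ∫ s in t..(-1:ℝ), m0 s := by
      have := integral_mono_on ht ((continuous_const (y := (1:ℝ))).intervalIntegrable t (-1))
        (m0_intable t (-1)) h1
      rwa [integral_const, smul_eq_mul, mul_one] at this
    have h3 : f (-1) - f t = ∫ s in t..(-1:ℝ), m0 s := f_sub t (-1)
    simp only [id]
    linarith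

noncomputable def fIso : ℝ ≃o ℝ := StrictMono.orderIsoOfSurjective f f_strictMono f_surjective

noncomputable def φ : ℝ → ℝ := fun y => fIso.symm y

lemma fIso_apply (x : ℝ) : fIso x = f x := rfl

lemma f_phi (y : ℝ) : f (φ y) = y := fIso.apply_symm_apply y

lemma phi_f (x : ℝ) : φ (f x) = x := fIso.symm_apply_apply x

lemma phi_continuous : Continuous φ := OrderIso.continuous fIso.symm

lemma phi_monotone : Monotone φ := fIso.symm.monotone

noncomputable def ψ (x : ℝ) : ℝ := ∫ s in (0:ℝ)..x, φ s

lemma psi_hasDerivAt (x : ℝ) : HasDerivAt ψ (φ x) x :=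
  (phi_continuous.integral_hasStrictDerivAt 0 x).hasDerivAt

lemma psi_deriv : deriv ψ = φ := funext fun x => (psi_hasDerivAt x).deriv

lemma psi_contDiff : ContDiff ℝ 1 ψ := by
  rw [contDiff_one_iff_deriv]
  exact ⟨fun x => (psi_hasDerivAt x).differentiableAt, by rw [psi_deriv]; exact phi_continuous⟩

lemma psi_convex : ConvexOn ℝ Set.univ ψ := by
  apply Monotone.convexOn_univ_of_deriv (fun x => (psi_hasDerivAt x).differentiableAt)
  rw [psi_deriv]; exact phi_monotone


noncomputable def F : ℝ → ℝ × ℝ := fun c => (f c, ψ (f c))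

lemma continuous_F : Continuous F := by
  unfold F
  exact f_continuous.prodMk (psi_contDiff.continuous.comp f_continuous)

def P : Set (ℝ × ℝ) := F '' C

lemma isCompact_P : IsCompact P := ((isCompact_range continuous_e).image continuous_F)

lemma P_nonempty : P.Nonempty := ⟨F (e fun _ => false), ⟨e fun _ => false, ⟨_, rfl⟩, rfl⟩⟩

lemma P_graph : P ⊆ {p : ℝ × ℝ | p.2 = ψ p.1} := by
  rintro p ⟨c, _, rfl⟩
  rfl

lemma P_perfect : Perfect P := by
  constructor
  · exact isCompact_P.isClosed
  · rintro p ⟨c, ⟨a, rfl⟩, rfl⟩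
    rw [accPt_iff_nhds]
    intro U hU
    obtain ⟨ε, hε, hball⟩ := Metric.mem_nhds_iff.mp hU
    have hcont : ContinuousAt F (e a) := continuous_F.continuousAt
    obtain ⟨δ, hδ, himp⟩ := Metric.continuousAt_iff.mp hcont ε hε
    obtain ⟨b, hne, hlt⟩ := approach a hδ
    refine ⟨F (e b), ⟨hball ?_, ⟨e b, ⟨b, rfl⟩, rfl⟩⟩, ?_⟩
    · apply himp
      rw [Real.dist_eq]
      exact hlt
    · intro hcontra
      apply hne
      have h1 : (F (e b)).1 = (F (e a)).1 := by rw [hcontra]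
      exact f_strictMono.injective h1

lemma mem_P {p : ℝ × ℝ} (hp : p ∈ P) : ∃ c ∈ C, p.1 = f c ∧ p.2 = ψ (f c) := by
  rcases hp with ⟨c, hc, rfl⟩
  exact ⟨c, hc, rfl, rfl⟩

lemma isClosed_P : IsClosed P := isCompact_P.isClosed

set_option maxHeartbeats 1000000 in
theorem main : ∀ (a b : ℝ) (g : ℝ → ℝ × ℝ), a ≤ b →
    ContDiffOn ℝ 2 g (Set.Icc a b) →
    Set.InjOn g (Set.Icc a b) →
    (∀ t ∈ Set.Icc a b, derivWithin g (Set.Icc a b) t ≠ 0) →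
    (P ∩ g '' Set.Icc a b).Finite := by
  intro a b g hab hg _hinj hne
  rcases eq_or_lt_of_le hab with rfl | hab
  · apply Set.Finite.subset (Set.finite_singleton (g a))
    rintro p ⟨_, t, ht, rfl⟩
    rw [Set.Icc_self, Set.mem_singleton_iff] at ht
    simp [ht]
  by_contra hfin
  have hinf : (P ∩ g '' Set.Icc a b).Infinite := hfin
  set I := Set.Icc a b with hI
  have huniq : UniqueDiffOn ℝ I := uniqueDiffOn_Icc hab
  set T := {t | t ∈ I ∧ g t ∈ P} with hT
  have hTsub : T ⊆ I := fun t ht => ht.1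
  have hTinf : T.Infinite := by
    intro hTfin
    apply hinf
    apply Set.Finite.subset (hTfin.image g)
    rintro p ⟨hpP, t, htI, rfl⟩
    exact ⟨t, ⟨htI, hpP⟩, rfl⟩
  obtain ⟨t₀, ht₀I, hacc⟩ := hTinf.exists_accPt_of_subset_isCompact isCompact_Icc hTsub
  have hgc : ContinuousOn g I := hg.continuousOn
  have ht₀P : g t₀ ∈ P := by
    have hclus : ClusterPt t₀ (𝓟 T) := hacc.clusterPt
    have ht₀cl : t₀ ∈ closure T := mem_closure_iff_clusterPt.mpr hclus
    have hcw : ContinuousWithinAt g T t₀ := (hgc t₀ ht₀I).mono hTsub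
    have himg := hcw.mem_closure_image ht₀cl
    apply isClosed_P.closure_subset
    refine closure_mono ?_ himg
    rintro p ⟨t, htT, rfl⟩
    exact htT.2
  set V := derivWithin g I with hV
  have hgd : ∀ t ∈ I, HasDerivWithinAt g (V t) I t := fun t ht =>
    (hg.differentiableOn (by norm_num) t ht).hasDerivWithinAt
  set g₁ : ℝ → ℝ := fun t => (g t).1 with hg₁
  have hg1d : ∀ t ∈ I, HasDerivWithinAt g₁ (V t).1 I t := fun t ht =>
    ((ContinuousLinearMap.fst ℝ ℝ ℝ).hasFDerivAt).comp_hasDerivWithinAt t (hgd t ht)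
  have hg2d : ∀ t ∈ I, HasDerivWithinAt (fun t => (g t).2) (V t).2 I t := fun t ht =>
    ((ContinuousLinearMap.snd ℝ ℝ ℝ).hasFDerivAt).comp_hasDerivWithinAt t (hgd t ht)
  set H : ℝ → ℝ := fun t => (g t).2 - ψ (g₁ t) with hH
  set E : ℝ → ℝ := fun t => (V t).2 - φ (g₁ t) * (V t).1 with hE
  have hHd : ∀ t ∈ I, HasDerivWithinAt H (E t) I t := fun t ht =>
    (hg2d t ht).sub ((psi_hasDerivAt (g₁ t)).comp_hasDerivWithinAt t (hg1d t ht))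
  have hHc : ContinuousOn H I := fun t ht => (hHd t ht).continuousWithinAt
  have hH_T : ∀ t ∈ T, H t = 0 := by
    rintro t ⟨_, htP⟩
    obtain ⟨c, _, h1, h2⟩ := mem_P htP
    simp only [hH, hg₁, h1, h2, sub_self]
  obtain ⟨c₀, hc₀C, hgt₀1, hgt₀2⟩ := mem_P ht₀P
  have hHt₀ : H t₀ = 0 := by simp only [hH, hg₁, hgt₀1, hgt₀2, sub_self]
  -- Rolle points arbitrarily close to t₀
  have key : ∀ ε > 0, ∃ ξ, ξ ∈ Set.Ioo a b ∧ ξ ≠ t₀ ∧ |ξ - t₀| < ε ∧ E ξ = 0 := by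
    intro ε hε
    obtain ⟨s, ⟨hsball, hsT⟩, hsne⟩ :=
      accPt_iff_nhds.mp hacc (Metric.ball t₀ ε) (Metric.ball_mem_nhds _ hε)
    have hsI : s ∈ I := hsT.1
    have hsdist : |s - t₀| < ε := by simpa [Real.dist_eq] using hsball
    have hHs : H s = 0 := hH_T s hsT
    rcases lt_or_gt_of_ne hsne with hlt | hgt
    · obtain ⟨ξ, hξ, hderiv⟩ := exists_deriv_eq_zero hlt
        (hHc.mono (Set.Icc_subset_Icc hsI.1 ht₀I.2)) (by rw [hHs, hHt₀])
      have hξIoo : ξ ∈ Set.Ioo a b := ⟨lt_of_le_of_lt hsI.1 hξ.1, lt_of_lt_of_le hξ.2 ht₀I.2⟩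
      have hξI : ξ ∈ I := Set.Ioo_subset_Icc_self hξIoo
      have hIn : I ∈ 𝓝 ξ := Icc_mem_nhds hξIoo.1 hξIoo.2
      have hda : HasDerivAt H (E ξ) ξ := (hHd ξ hξI).hasDerivAt hIn
      refine ⟨ξ, hξIoo, ne_of_lt hξ.2, ?_, by rw [← hda.deriv]; exact hderiv⟩
      rw [abs_lt]; rw [abs_lt] at hsdist
      constructor <;> [linarith [hξ.1]; linarith [hξ.2]]
    · obtain ⟨ξ, hξ, hderiv⟩ := exists_deriv_eq_zero hgt
        (hHc.mono (Set.Icc_subset_Icc ht₀I.1 hsI.2)) (by rw [hHs, hHt₀])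
      have hξIoo : ξ ∈ Set.Ioo a b := ⟨lt_of_le_of_lt ht₀I.1 hξ.1, lt_of_lt_of_le hξ.2 hsI.2⟩
      have hξI : ξ ∈ I := Set.Ioo_subset_Icc_self hξIoo
      have hIn : I ∈ 𝓝 ξ := Icc_mem_nhds hξIoo.1 hξIoo.2
      have hda : HasDerivAt H (E ξ) ξ := (hHd ξ hξI).hasDerivAt hIn
      refine ⟨ξ, hξIoo, ne_of_gt hξ.1, ?_, by rw [← hda.deriv]; exact hderiv⟩
      rw [abs_lt]; rw [abs_lt] at hsdist
      constructor <;> [linarith [hξ.1]; linarith [hξ.2]]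
  -- E is continuous on I and vanishes at t₀
  have hVc : ContinuousOn V I := hg.continuousOn_derivWithin huniq (by norm_num)
  have hEc : ContinuousOn E I := by
    apply ContinuousOn.sub
    · exact continuous_snd.comp_continuousOn hVc
    · exact ((phi_continuous.comp_continuousOn
        (continuous_fst.comp_continuousOn hgc))).mul (continuous_fst.comp_continuousOn hVc)
  have hEt₀ : E t₀ = 0 := by
    have hseq : ∀ n : ℕ, ∃ ξ, ξ ∈ Set.Ioo a b ∧ ξ ≠ t₀ ∧ |ξ - t₀| < 1/(n+1) ∧ E ξ = 0 :=
      fun n => key _ (by positivity)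
    choose ξ hξIoo hξne hξdist hξE using hseq
    have htend : Tendsto ξ atTop (𝓝 t₀) := by
      rw [tendsto_iff_dist_tendsto_zero]
      apply squeeze_zero (fun n => dist_nonneg)
        (fun n => le_of_lt (by simpa [Real.dist_eq] using hξdist n))
      have := tendsto_one_div_add_atTop_nhds_zero_nat (𝕜 := ℝ)
      simpa [one_div] using this
    have htendI : Tendsto ξ atTop (𝓝[I] t₀) := by
      rw [tendsto_nhdsWithin_iff]
      exact ⟨htend, Eventually.of_forall fun n => Set.Ioo_subset_Icc_self (hξIoo n)⟩
    have hlim : Tendsto (E ∘ ξ) atTop (𝓝 (E t₀)) := ((hEc t₀ ht₀I).tendsto).comp htendI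
    have hzero : Tendsto (E ∘ ξ) atTop (𝓝 0) := by
      have : (E ∘ ξ) = fun _ => (0:ℝ) := funext fun n => hξE n
      rw [this]; exact tendsto_const_nhds
    exact tendsto_nhds_unique hlim hzero
  clear_value V g₁ H E
  by_cases hv1 : (V t₀).1 = 0
  · apply hne t₀ ht₀I
    have h2 : (V t₀).2 = 0 := by
      have := hEt₀
      simp only [hE, hv1, mul_zero, sub_zero] at this
      exact this
    have : V t₀ = 0 := by rw [Prod.ext_iff]; exact ⟨hv1, h2⟩
    exact this
  · -- main case : nonvertical tangent
    set v₁ := (V t₀).1 with hv₁def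
    set φ₀ := φ (g₁ t₀) with hφ₀def
    have hv₂ : (V t₀).2 = φ₀ * v₁ := by
      have := hEt₀
      simp only [hE] at this
      linarith
    have hφ₀C : φ₀ ∈ C := by
      rw [hφ₀def, hg₁]
      simp only [hgt₀1, phi_f]
      exact hc₀C
    have hgt₀1' : g₁ t₀ = f c₀ := by rw [hg₁]; exact hgt₀1
    have hVd : DifferentiableWithinAt ℝ V I t₀ := by
      rw [hV]
      exact ((hg.derivWithin huniq (by norm_num : (1:WithTop ℕ∞) + 1 ≤ 2)).differentiableOn one_ne_zero) t₀ ht₀I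
    set D := derivWithin V I t₀ with hD
    have hVD : HasDerivWithinAt V D I t₀ := hVd.hasDerivWithinAt
    clear_value D v₁ φ₀
    have hv₁pos : 0 < |v₁| := abs_pos.mpr hv1
    set L : ℝ := (1 + |φ₀|) * (‖D‖ + 1) * (2 / |v₁|) + 1 with hL
    have hLpos : 0 < L := by positivity
    clear_value L
    set ε₀ : ℝ := (|v₁|/2) / L^2 with hε₀
    have hε₀pos : 0 < ε₀ := by positivity
    clear_value ε₀
    -- eventual bounds
    have hlow : ∀ᶠ x in 𝓝[I] t₀, (|v₁|/2) * |x - t₀| ≤ |g₁ x - g₁ t₀| := by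
      have hlittle := hasDerivWithinAt_iff_isLittleO.mp (hg1d t₀ ht₀I)
      filter_upwards [hlittle.def (by positivity : (0:ℝ) < |v₁|/2)] with x hx
      rw [Real.norm_eq_abs, Real.norm_eq_abs, ← hv₁def] at hx
      have h1 : |(x - t₀) * v₁| - |g₁ x - g₁ t₀| ≤ |g₁ x - g₁ t₀ - (x - t₀) • v₁| := by
        rw [smul_eq_mul]
        have := abs_sub_abs_le_abs_sub ((x - t₀) * v₁) (g₁ x - g₁ t₀)
        have h2 := abs_sub_comm ((x - t₀) * v₁) (g₁ x - g₁ t₀)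
        rw [h2] at this
        linarith
      rw [abs_mul] at h1
      nlinarith [hx, h1]
    have hVbnd : ∀ᶠ x in 𝓝[I] t₀, ‖V x - V t₀‖ ≤ (‖D‖ + 1) * |x - t₀| := by
      have hlittle := hasDerivWithinAt_iff_isLittleO.mp hVD
      filter_upwards [hlittle.def one_pos] with x hx
      rw [Real.norm_eq_abs] at hx
      have h1 : ‖V x - V t₀‖ ≤ ‖V x - V t₀ - (x - t₀) • D‖ + ‖(x - t₀) • D‖ := by
        have := norm_add_le (V x - V t₀ - (x - t₀) • D) ((x - t₀) • D)
        simpa using this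
      have h2 : ‖(x - t₀) • D‖ = |x - t₀| * ‖D‖ := by
        rw [norm_smul, Real.norm_eq_abs]
      nlinarith [hx, h1, h2]
    have hsmall : ∀ᶠ x in 𝓝[I] t₀, |x - t₀| < |v₁| / (2 * (‖D‖ + 1)) := by
      apply Filter.Eventually.filter_mono nhdsWithin_le_nhds
      have : (0:ℝ) < |v₁| / (2 * (‖D‖ + 1)) := by positivity
      exact eventually_abs_sub_lt t₀ this
    have hev := hlow.and (hVbnd.and hsmall)
    obtain ⟨δ, hδpos, hδsub⟩ := mem_nhdsWithin_iff.mp hev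
    obtain ⟨ξ, hξIoo, hξne, hξdist, hξE⟩ := key (min δ ε₀) (lt_min hδpos hε₀pos)
    have hξI : ξ ∈ I := Set.Ioo_subset_Icc_self hξIoo
    have hξball : ξ ∈ Metric.ball t₀ δ := by
      rw [Metric.mem_ball, Real.dist_eq]
      exact lt_of_lt_of_le hξdist (min_le_left _ _)
    obtain ⟨hb1, hb2, hb3⟩ := hδsub ⟨hξball, hξI⟩
    -- lower bound on |(V ξ).1|
    have hfst : |(V ξ).1 - v₁| ≤ ‖V ξ - V t₀‖ := by
      have heq : (V ξ).1 - v₁ = (V ξ - V t₀).1 := by rw [hv₁def, Prod.fst_sub]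
      rw [heq, ← Real.norm_eq_abs]
      exact norm_fst_le _
    have hDpos : (0:ℝ) < ‖D‖ + 1 := by positivity
    have hVξ1 : |v₁|/2 ≤ |(V ξ).1| := by
      have h2 : |(V ξ).1 - v₁| ≤ (‖D‖+1) * |ξ - t₀| := le_trans hfst hb2
      have h3 : (‖D‖+1) * |ξ - t₀| < (‖D‖+1) * (|v₁|/(2*(‖D‖+1))) :=
        mul_lt_mul_of_pos_left hb3 hDpos
      have h4 : (‖D‖+1) * (|v₁|/(2*(‖D‖+1))) = |v₁|/2 := by
        field_simp
      have h5 := abs_sub_abs_le_abs_sub v₁ ((V ξ).1)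
      rw [abs_sub_comm v₁ ((V ξ).1)] at h5
      linarith
    have hVξ1ne : (V ξ).1 ≠ 0 := by
      intro h
      rw [h, abs_zero] at hVξ1
      linarith
    have hphi : φ (g₁ ξ) = (V ξ).2 / (V ξ).1 := by
      have h0 : (V ξ).2 - φ (g₁ ξ) * (V ξ).1 = 0 := by
        have h' := hξE
        rw [hE] at h'
        simpa using h'
      field_simp
      linarith
    -- Lipschitz-type bound on φ ∘ g₁ between ξ and t₀
    have hsnd : |(V ξ).2 - (V t₀).2| ≤ ‖V ξ - V t₀‖ := by
      have heq : (V ξ).2 - (V t₀).2 = (V ξ - V t₀).2 := by rw [Prod.snd_sub]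
      rw [heq, ← Real.norm_eq_abs]
      exact norm_snd_le _
    have hbound : |φ (g₁ ξ) - φ₀| ≤ L * |ξ - t₀| := by
      rw [hphi]
      have halg : ∀ A B : ℝ, A ≠ 0 → B / A - φ₀ = ((B - φ₀ * v₁) - φ₀ * (A - v₁)) / A := by
        intro A B hA
        field_simp
        ring
      rw [halg _ _ hVξ1ne, abs_div]
      have hnum : |((V ξ).2 - φ₀ * v₁) - φ₀ * ((V ξ).1 - v₁)|
          ≤ (1 + |φ₀|) * ((‖D‖ + 1) * |ξ - t₀|) := by
        have t1 := abs_sub ((V ξ).2 - φ₀ * v₁) (φ₀ * ((V ξ).1 - v₁))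
        have t2 : |φ₀ * ((V ξ).1 - v₁)| = |φ₀| * |(V ξ).1 - v₁| := abs_mul _ _
        have t3 : |(V ξ).2 - φ₀ * v₁| ≤ (‖D‖ + 1) * |ξ - t₀| := by
          rw [← hv₂]
          exact le_trans hsnd hb2
        have t4 : |(V ξ).1 - v₁| ≤ (‖D‖ + 1) * |ξ - t₀| := le_trans hfst hb2
        have t5 : |φ₀| * |(V ξ).1 - v₁| ≤ |φ₀| * ((‖D‖ + 1) * |ξ - t₀|) :=
          mul_le_mul_of_nonneg_left t4 (abs_nonneg _)
        nlinarith
      have hden : |v₁|/2 ≤ |(V ξ).1| := hVξ1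
      have habs : |((V ξ).2 - φ₀ * v₁) - φ₀ * ((V ξ).1 - v₁)| / |(V ξ).1|
          ≤ ((1 + |φ₀|) * ((‖D‖ + 1) * |ξ - t₀|)) / (|v₁|/2) := by
        apply div_le_div₀ (by positivity) hnum (by positivity) hden
      refine le_trans habs ?_
      rw [hL]
      have : ((1 + |φ₀|) * ((‖D‖ + 1) * |ξ - t₀|)) / (|v₁|/2)
          = (1 + |φ₀|) * (‖D‖ + 1) * (2 / |v₁|) * |ξ - t₀| := by
        field_simp
      rw [this]
      nlinarith [abs_nonneg (ξ - t₀)]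
    -- superlinear upper bound on |g₁ ξ - g₁ t₀|
    have hup : |g₁ ξ - g₁ t₀| ≤ (L * |ξ - t₀|)^2 := by
      have hf := f_flat hφ₀C (φ (g₁ ξ))
      rw [f_phi] at hf
      have hfc : f φ₀ = g₁ t₀ := by rw [hφ₀def, f_phi]
      rw [hfc] at hf
      refine le_trans hf ?_
      have h1 : |φ (g₁ ξ) - φ₀| ^ 2 ≤ (L * |ξ - t₀|)^2 := by
        apply pow_le_pow_left₀ (abs_nonneg _) hbound
      rw [← sq_abs]
      exact h1
    have hpos : 0 < |ξ - t₀| := abs_pos.mpr (sub_ne_zero.mpr hξne)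
    have hcontr : ε₀ ≤ |ξ - t₀| := by
      have h6 : |v₁|/2 * |ξ - t₀| ≤ L^2 * |ξ - t₀|^2 := by nlinarith [hb1, hup]
      have h7 : |v₁|/2 ≤ L^2 * |ξ - t₀| := by
        rcases le_or_gt (|v₁|/2) (L^2 * |ξ - t₀|) with h|h
        · exact h
        · exfalso; nlinarith [h6, hpos]
      rw [hε₀, div_le_iff₀ (by positivity : (0:ℝ) < L^2)]
      linarith
    have : |ξ - t₀| < ε₀ := lt_of_lt_of_le hξdist (min_le_right _ _)
    linarith

end Stmt16

end

theorem stmt_16 :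
    ∃ ψ : ℝ → ℝ, ContDiff ℝ 1 ψ ∧ ConvexOn ℝ Set.univ ψ ∧
      ∃ P : Set (ℝ × ℝ), Perfect P ∧ P.Nonempty ∧
        P ⊆ {p : ℝ × ℝ | p.2 = ψ p.1} ∧
        ∀ (a b : ℝ) (g : ℝ → ℝ × ℝ), a ≤ b →
          ContDiffOn ℝ 2 g (Set.Icc a b) →
          Set.InjOn g (Set.Icc a b) →
          (∀ t ∈ Set.Icc a b, derivWithin g (Set.Icc a b) t ≠ 0) →
          (P ∩ g '' Set.Icc a b).Finite := by
  exact ⟨Stmt16.ψ, Stmt16.psi_contDiff, Stmt16.psi_convex, Stmt16.P, Stmt16.P_perfect,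
    Stmt16.P_nonempty, Stmt16.P_graph, Stmt16.main⟩
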